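/- The piecewise timing map f₀ : [0,T] → [0,2N] defined segmentwise by quintic ease functions with alternating parameters (a_min, a_max) and (a_max, a_min), where a_min = 1-β, a_max = 1+β, β ∈ [0,1], is continuous on [0,T], satisfies f₀(0) = 0 and f₀(T) = 2N, and is continuously differentiable at segment boundaries (the one-sided derivatives match because ease'(1) of one segment equals ease'(0) of the next, up to the alternation: a_max meets a_max and a_min meets a_min). -/

import Mathlib

noncomputable def ease (a b : ℝ) : ℝ → ℝ :=
  fun τ => a*τ + (-6*a - 4*b + 10)*τ^3 + (8*a + 7*b - 15)*τ^4 + (-3*a - 3*b + 6)*τ^5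

noncomputable def ease' (a b τ : ℝ) : ℝ :=
  a + 3*(-6*a - 4*b + 10)*τ^2 + 4*(8*a + 7*b - 15)*τ^3 + 5*(-3*a - 3*b + 6)*τ^4

lemma ease_hasDerivAt (a b τ : ℝ) : HasDerivAt (ease a b) (ease' a b τ) τ := by
  unfold ease ease'
  have h1 : HasDerivAt (fun τ : ℝ => a * τ) a τ := by
    simpa using (hasDerivAt_id τ).const_mul a
  have h3 := (hasDerivAt_pow 3 τ).const_mul (-6*a - 4*b + 10)
  have h4 := (hasDerivAt_pow 4 τ).const_mul (8*a + 7*b - 15)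
  have h5 := (hasDerivAt_pow 5 τ).const_mul (-3*a - 3*b + 6)
  refine (((h1.add h3).add h4).add h5).congr_deriv ?_
  push_cast
  ring

lemma ease_zero (a b : ℝ) : ease a b 0 = 0 := by simp [ease]

lemma ease_one (a b : ℝ) : ease a b 1 = 1 := by simp [ease]; ring

lemma ease'_zero (a b : ℝ) : ease' a b 0 = a := by simp [ease']

lemma ease'_one (a b : ℝ) : ease' a b 1 = b := by simp [ease']; ring

/-- The polynomial describing `f₀` on the `i`-th segment. -/
noncomputable def Pseg (β Δ : ℝ) (i : ℤ) : ℝ → ℝ := fun t =>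
  if Even i then (i : ℝ) + ease (1 - β) (1 + β) (t / Δ - i)
  else (i : ℝ) + ease (1 + β) (1 - β) (t / Δ - i)

lemma Pseg_hasDerivAt (β Δ : ℝ) (hΔ : Δ ≠ 0) (i : ℤ) (t : ℝ) :
    HasDerivAt (Pseg β Δ i)
      ((if Even i then ease' (1 - β) (1 + β) (t / Δ - i)
        else ease' (1 + β) (1 - β) (t / Δ - i)) / Δ) t := by
  have hu : HasDerivAt (fun t : ℝ => t / Δ - (i : ℝ)) (1 / Δ) t := by
    simpa using ((hasDerivAt_id t).div_const Δ).sub_const (i : ℝ)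
  by_cases h : Even i
  · have := ((ease_hasDerivAt (1 - β) (1 + β) (t / Δ - i)).comp t hu).const_add (i : ℝ)
    refine (this.congr_deriv ?_).congr_of_eventuallyEq (Filter.Eventually.of_forall fun x => ?_)
    · rw [if_pos h]; ring
    · simp [Pseg, if_pos h, Function.comp]
  · have := ((ease_hasDerivAt (1 + β) (1 - β) (t / Δ - i)).comp t hu).const_add (i : ℝ)
    refine (this.congr_deriv ?_).congr_of_eventuallyEq (Filter.Eventually.of_forall fun x => ?_)
    · rw [if_neg h]; ring
    · simp [Pseg, if_neg h, Function.comp]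

theorem timing_map_smooth (T : ℝ) (hT : 0 < T) (N : ℕ) (hN : 0 < N)
    (β : ℝ) (hβ : β ∈ Set.Icc (0:ℝ) 1)
    (Δ : ℝ) (hΔ : Δ = T / (2 * N)) (f₀ : ℝ → ℝ)
    (hf : ∀ t : ℝ, f₀ t =
      if Even ⌊t / Δ⌋ then
        (⌊t / Δ⌋ : ℝ) + ease (1 - β) (1 + β) (t / Δ - (⌊t / Δ⌋ : ℝ))
      else
        (⌊t / Δ⌋ : ℝ) + ease (1 + β) (1 - β) (t / Δ - (⌊t / Δ⌋ : ℝ))) :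
    ContinuousOn f₀ (Set.Icc 0 T) ∧ f₀ 0 = 0 ∧ f₀ T = 2 * N ∧
    ∀ i : ℕ, 0 < i → i < 2 * N →
      derivWithin f₀ (Set.Iic ((i : ℝ) * Δ)) ((i : ℝ) * Δ) =
      derivWithin f₀ (Set.Ici ((i : ℝ) * Δ)) ((i : ℝ) * Δ) := by
  have hNpos : (0:ℝ) < 2 * N := by positivity
  have hΔpos : 0 < Δ := by rw [hΔ]; positivity
  have hΔne : Δ ≠ 0 := ne_of_gt hΔpos
  -- floor on the half-open segment
  have hfloor : ∀ (i : ℤ) (t : ℝ), (i : ℝ) * Δ ≤ t → t < ((i : ℝ) + 1) * Δ →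
      ⌊t / Δ⌋ = i := by
    intro i t h1 h2
    rw [Int.floor_eq_iff]
    constructor
    · rw [le_div_iff₀ hΔpos]; linarith
    · rw [div_lt_iff₀ hΔpos]; push_cast; linarith
  -- f₀ agrees with Pseg on the closed segment
  have hseg : ∀ (i : ℤ) (t : ℝ), t ∈ Set.Icc ((i : ℝ) * Δ) (((i : ℝ) + 1) * Δ) →
      f₀ t = Pseg β Δ i t := by
    intro i t ht
    rcases lt_or_eq_of_le ht.2 with h2 | h2
    · have hfl := hfloor i t ht.1 h2
      rw [hf, hfl, Pseg]
    · -- t is the right endpoint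
      have htd : t / Δ = (i : ℝ) + 1 := by
        field_simp [h2]
        rw [h2]; ring
      have hfl : ⌊t / Δ⌋ = i + 1 := by
        rw [htd]; exact_mod_cast Int.floor_intCast (i + 1)
      have hval : f₀ t = (i : ℝ) + 1 := by
        rw [hf, hfl]
        push_cast [htd]
        by_cases h : Even (i + 1) <;> simp [h, ease_zero]
      have hPval : Pseg β Δ i t = (i : ℝ) + 1 := by
        unfold Pseg
        rw [htd]
        by_cases h : Even i <;> simp [h, ease_one] <;> ring
      rw [hval, hPval]
  -- left/right continuity everywhere
  have hright : ∀ x : ℝ, ContinuousWithinAt f₀ (Set.Ici x) x := by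
    intro x
    set i : ℤ := ⌊x / Δ⌋ with hi
    have h1 : (i : ℝ) * Δ ≤ x := by
      rw [← le_div_iff₀ hΔpos]; exact Int.floor_le _
    have h2 : x < ((i : ℝ) + 1) * Δ := by
      rw [← div_lt_iff₀ hΔpos]; exact Int.lt_floor_add_one _
    have hmem : Set.Ici x ∩ Set.Iio (((i : ℝ) + 1) * Δ) ∈ nhdsWithin x (Set.Ici x) :=
      Filter.inter_mem self_mem_nhdsWithin
        (mem_nhdsWithin_of_mem_nhds (Iio_mem_nhds h2))
    have heq : f₀ =ᶠ[nhdsWithin x (Set.Ici x)] Pseg β Δ i := by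
      filter_upwards [hmem] with t ht
      exact hseg i t ⟨le_trans h1 ht.1, le_of_lt ht.2⟩
    have hx : f₀ x = Pseg β Δ i x := hseg i x ⟨h1, le_of_lt h2⟩
    exact ContinuousWithinAt.congr_of_eventuallyEq
      ((Pseg_hasDerivAt β Δ hΔne i x).continuousAt.continuousWithinAt) heq hx
  have hleft : ∀ x : ℝ, ContinuousWithinAt f₀ (Set.Iic x) x := by
    intro x
    obtain ⟨j, hj⟩ : ∃ j : ℤ, (j : ℝ) = (⌈x / Δ⌉ : ℝ) - 1 :=
      ⟨⌈x / Δ⌉ - 1, by push_cast; ring⟩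
    have h1 : (j : ℝ) * Δ < x := by
      rw [← lt_div_iff₀ hΔpos, hj]
      have := Int.ceil_lt_add_one (x / Δ)
      linarith
    have h2 : x ≤ ((j : ℝ) + 1) * Δ := by
      rw [← div_le_iff₀ hΔpos, hj]
      have := Int.le_ceil (x / Δ)
      linarith
    have hmem : Set.Iic x ∩ Set.Ioi ((j : ℝ) * Δ) ∈ nhdsWithin x (Set.Iic x) :=
      Filter.inter_mem self_mem_nhdsWithin
        (mem_nhdsWithin_of_mem_nhds (Ioi_mem_nhds h1))
    have heq : f₀ =ᶠ[nhdsWithin x (Set.Iic x)] Pseg β Δ j := by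
      filter_upwards [hmem] with t ht
      exact hseg j t ⟨le_of_lt ht.2, le_trans ht.1 h2⟩
    have hx : f₀ x = Pseg β Δ j x := hseg j x ⟨le_of_lt h1, h2⟩
    exact ContinuousWithinAt.congr_of_eventuallyEq
      ((Pseg_hasDerivAt β Δ hΔne j x).continuousAt.continuousWithinAt) heq hx
  have hcont : ∀ x : ℝ, ContinuousAt f₀ x := by
    intro x
    have := (hleft x).union (hright x)
    rwa [Set.Iic_union_Ici, continuousWithinAt_univ] at this
  refine ⟨fun x _ => (hcont x).continuousWithinAt, ?_, ?_, ?_⟩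
  · -- f₀ 0 = 0
    rw [hf]
    norm_num [ease_zero]
  · -- f₀ T = 2N
    have hTd : T / Δ = 2 * N := by
      rw [hΔ]
      field_simp
    have hfl : ⌊T / Δ⌋ = (2 * N : ℕ) := by
      rw [hTd]; exact_mod_cast Int.floor_natCast (2 * N)
    rw [hf, hfl]
    have : Even ((2 * N : ℕ) : ℤ) := ⟨N, by push_cast; ring⟩
    rw [if_pos this]
    push_cast [hTd]
    simp [ease_zero]
  · -- matching one-sided derivatives
    intro i hi0 hi2N
    set x : ℝ := (i : ℝ) * Δ with hxdef
    set I : ℤ := (i : ℤ) with hI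
    have hxI : x = (I : ℝ) * Δ := by rw [hxdef, hI]; push_cast; ring
    have hxd : x / Δ = (I : ℝ) := by rw [hxI]; field_simp
    -- left side: segment I - 1
    have hL1 : ((I - 1 : ℤ) : ℝ) * Δ < x := by
      rw [hxI]
      have : ((I - 1 : ℤ) : ℝ) < (I : ℝ) := by push_cast; linarith
      exact mul_lt_mul_of_pos_right this hΔpos
    have hL2 : x = (((I - 1 : ℤ) : ℝ) + 1) * Δ := by push_cast [hxI]; ring
    have hmemL : Set.Iic x ∩ Set.Ioi (((I - 1 : ℤ) : ℝ) * Δ) ∈ nhdsWithin x (Set.Iic x) :=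
      Filter.inter_mem self_mem_nhdsWithin
        (mem_nhdsWithin_of_mem_nhds (Ioi_mem_nhds hL1))
    have heqL : f₀ =ᶠ[nhdsWithin x (Set.Iic x)] Pseg β Δ (I - 1) := by
      filter_upwards [hmemL] with t ht
      exact hseg (I - 1) t ⟨le_of_lt ht.2, le_of_le_of_eq ht.1 hL2⟩
    have hxL : f₀ x = Pseg β Δ (I - 1) x := hseg (I - 1) x ⟨le_of_lt hL1, le_of_eq hL2⟩
    have hdL : derivWithin f₀ (Set.Iic x) x =
        (if Even (I - 1) then ease' (1 - β) (1 + β) (x / Δ - ((I - 1 : ℤ) : ℝ))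
         else ease' (1 + β) (1 - β) (x / Δ - ((I - 1 : ℤ) : ℝ))) / Δ := by
      rw [heqL.derivWithin_eq hxL]
      exact (Pseg_hasDerivAt β Δ hΔne (I - 1) x).hasDerivWithinAt.derivWithin
        ((uniqueDiffOn_Iic x) x Set.self_mem_Iic)
    -- right side: segment I
    have hR2 : x < ((I : ℝ) + 1) * Δ := by
      rw [hxI]
      have : (I : ℝ) < (I : ℝ) + 1 := by linarith
      exact mul_lt_mul_of_pos_right this hΔpos
    have hmemR : Set.Ici x ∩ Set.Iio (((I : ℝ) + 1) * Δ) ∈ nhdsWithin x (Set.Ici x) :=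
      Filter.inter_mem self_mem_nhdsWithin
        (mem_nhdsWithin_of_mem_nhds (Iio_mem_nhds hR2))
    have heqR : f₀ =ᶠ[nhdsWithin x (Set.Ici x)] Pseg β Δ I := by
      filter_upwards [hmemR] with t ht
      exact hseg I t ⟨le_trans (le_of_eq hxI) ht.1, le_of_lt ht.2⟩
    have hxR : f₀ x = Pseg β Δ I x := hseg I x ⟨le_of_eq hxI, le_of_lt hR2⟩
    have hdR : derivWithin f₀ (Set.Ici x) x =
        (if Even I then ease' (1 - β) (1 + β) (x / Δ - (I : ℝ))
         else ease' (1 + β) (1 - β) (x / Δ - (I : ℝ))) / Δ := by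
      rw [heqR.derivWithin_eq hxR]
      exact (Pseg_hasDerivAt β Δ hΔne I x).hasDerivWithinAt.derivWithin
        ((uniqueDiffOn_Ici x) x Set.self_mem_Ici)
    rw [hdL, hdR]
    have hτL : x / Δ - ((I - 1 : ℤ) : ℝ) = 1 := by push_cast [hxd]; ring
    have hτR : x / Δ - (I : ℝ) = 0 := by rw [hxd]; ring
    rw [hτL, hτR]
    by_cases h : Even I
    · rw [if_pos h, if_neg (by simpa [Int.even_sub_one] using h), ease'_one, ease'_zero]
    · rw [if_neg h, if_pos (by simpa [Int.even_sub_one] using h), ease'_one, ease'_zero]
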